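/- Let M = {(z,w) ∈ ℂ² : Im w = |z|²}, identified with ℂ×ℝ via ι(z,s) = (z, s+i|z|²), with CR vector field Λ = ∂/∂z̄ − iz ∂/∂s. Let φ : ℂ×ℝ → ℂ be a C² function defined near 0 with Λφ = 0, φ(0) = 0, and (∂φ/∂z)(0) ≠ 0. Set f = (φ², φ) and f̄ = (conj(φ)², conj(φ)). Then the two vectors (Λ f̄)(0) and (Λ² f̄)(0) span ℂ² (indeed (Λ f̄)(0) = (0, conj((∂φ/∂z)(0))) and the first component of (Λ² f̄)(0) is 2·conj((∂φ/∂z)(0))² ≠ 0). -/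

import Mathlib

open Complex Topology

noncomputable section

/-- The Wirtinger derivative `∂/∂z̄` of a function on `ℂ × ℝ`. -/
def dzb (f : ℂ × ℝ → ℂ) (p : ℂ × ℝ) : ℂ :=
  (1 / 2 : ℂ) * (fderiv ℝ f p (1, 0) + Complex.I * fderiv ℝ f p (Complex.I, 0))

/-- The Wirtinger derivative `∂/∂z` of a function on `ℂ × ℝ`. -/
def dz (f : ℂ × ℝ → ℂ) (p : ℂ × ℝ) : ℂ :=
  (1 / 2 : ℂ) * (fderiv ℝ f p (1, 0) - Complex.I * fderiv ℝ f p (Complex.I, 0))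

/-- The derivative `∂/∂s` of a function on `ℂ × ℝ`. -/
def dsR (f : ℂ × ℝ → ℂ) (p : ℂ × ℝ) : ℂ := fderiv ℝ f p (0, 1)

/-- The CR vector field `Λ = ∂/∂z̄ − iz ∂/∂s` of `M = {Im w = |z|²}`. -/
def Lam (f : ℂ × ℝ → ℂ) (p : ℂ × ℝ) : ℂ :=
  dzb f p - Complex.I * p.1 * dsR f p

/-- `Λ` acting componentwise on `ℂ²`-valued functions. -/
def LamV (v : ℂ × ℝ → ℂ × ℂ) (p : ℂ × ℝ) : ℂ × ℂ :=
  (Lam (fun q => (v q).1) p, Lam (fun q => (v q).2) p)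

private lemma Lam_congr {f g : ℂ × ℝ → ℂ} {p : ℂ × ℝ} (h : f =ᶠ[𝓝 p] g) :
    Lam f p = Lam g p := by
  unfold Lam dzb dsR
  rw [h.fderiv_eq]

private lemma Lam_mul {f g : ℂ × ℝ → ℂ} {p : ℂ × ℝ}
    (hf : DifferentiableAt ℝ f p) (hg : DifferentiableAt ℝ g p) :
    Lam (fun q => f q * g q) p = f p * Lam g p + g p * Lam f p := by
  unfold Lam dzb dsR
  rw [fderiv_fun_mul hf hg]
  simp only [ContinuousLinearMap.add_apply, ContinuousLinearMap.smul_apply, smul_eq_mul]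
  ring

private lemma Lam_const_mul {f : ℂ × ℝ → ℂ} {p : ℂ × ℝ} (c : ℂ)
    (hf : DifferentiableAt ℝ f p) :
    Lam (fun q => c * f q) p = c * Lam f p := by
  unfold Lam dzb dsR
  rw [fderiv_const_mul hf c]
  simp only [ContinuousLinearMap.smul_apply, smul_eq_mul]
  ring

private lemma fderiv_conj {f : ℂ × ℝ → ℂ} {p : ℂ × ℝ} (v : ℂ × ℝ) :
    fderiv ℝ (fun q => (starRingEnd ℂ) (f q)) p v = (starRingEnd ℂ) (fderiv ℝ f p v) := by
  have h1 : (fun q => (starRingEnd ℂ) (f q)) = ⇑Complex.conjCLE ∘ f := rfl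
  rw [h1, ContinuousLinearEquiv.comp_fderiv]
  rfl

private lemma Lam_conj {f : ℂ × ℝ → ℂ} {p : ℂ × ℝ} :
    Lam (fun q => (starRingEnd ℂ) (f q)) p
      = (starRingEnd ℂ) (dz f p) - Complex.I * p.1 * (starRingEnd ℂ) (dsR f p) := by
  unfold Lam dzb dz dsR
  rw [fderiv_conj, fderiv_conj, fderiv_conj]
  simp only [map_mul, map_sub, map_add, Complex.conj_I, map_div₀, map_one, map_ofNat]
  ring

private lemma diff_conj {f : ℂ × ℝ → ℂ} {p : ℂ × ℝ} (hf : DifferentiableAt ℝ f p) :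
    DifferentiableAt ℝ (fun q => (starRingEnd ℂ) (f q)) p :=
  (Complex.conjCLE.differentiableAt).comp p hf

private lemma span_pair_top {a b : ℂ} (ha : a ≠ 0) (hb : b ≠ 0) (c : ℂ) :
    Submodule.span ℂ {((0 : ℂ), a), (b, c)} = ⊤ := by
  rw [eq_top_iff]
  rintro ⟨x, y⟩ -
  rw [Submodule.mem_span_pair]
  refine ⟨(y - (x / b) * c) / a, x / b, ?_⟩
  ext
  · simp only [Prod.smul_mk, Prod.fst_add, smul_eq_mul]
    field_simp
    ring
  · simp only [Prod.smul_mk, Prod.snd_add, smul_eq_mul]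
    field_simp
    ring

/-- Example 1.6, due to D. Zaitsev: for a `C²` CR function `φ` on
`M = {Im w = |z|²}` with `φ(0) = 0` and `φ_z(0) ≠ 0`, setting `f̄ = (conj φ ², conj φ)`,
the vectors `(Λ f̄)(0)` and `(Λ² f̄)(0)` span `ℂ²`; indeed `(Λ f̄)(0) = (0, conj (φ_z(0)))`
and the first component of `(Λ² f̄)(0)` is `2 conj(φ_z(0))² ≠ 0`. -/
theorem zaitsev_example (φ : ℂ × ℝ → ℂ) (U : Set (ℂ × ℝ)) (hU : IsOpen U)
    (h0U : (0 : ℂ × ℝ) ∈ U)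
    (hφsm : ContDiffOn ℝ 2 φ U)
    (hφCR : ∀ p ∈ U, Lam φ p = 0)
    (hφ0 : φ 0 = 0)
    (hφz0 : dz φ 0 ≠ 0) :
    LamV (fun p => (((starRingEnd ℂ) (φ p)) ^ 2, (starRingEnd ℂ) (φ p))) 0 =
      (0, (starRingEnd ℂ) (dz φ 0)) ∧
    (LamV (LamV (fun p => (((starRingEnd ℂ) (φ p)) ^ 2, (starRingEnd ℂ) (φ p)))) 0).1 =
      2 * ((starRingEnd ℂ) (dz φ 0)) ^ 2 ∧
    2 * ((starRingEnd ℂ) (dz φ 0)) ^ 2 ≠ 0 ∧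
    Submodule.span ℂ
      {LamV (fun p => (((starRingEnd ℂ) (φ p)) ^ 2, (starRingEnd ℂ) (φ p))) 0,
        LamV (LamV (fun p => (((starRingEnd ℂ) (φ p)) ^ 2, (starRingEnd ℂ) (φ p)))) 0} = ⊤ := by
  set ψ : ℂ × ℝ → ℂ := fun q => (starRingEnd ℂ) (φ q) with hψdef
  have hUnhds : U ∈ 𝓝 (0 : ℂ × ℝ) := hU.mem_nhds h0U
  have hφCA : ∀ p ∈ U, ContDiffAt ℝ 2 φ p := fun p hp => hφsm.contDiffAt (hU.mem_nhds hp)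
  have hφd : ∀ p ∈ U, DifferentiableAt ℝ φ p := fun p hp =>
    (hφCA p hp).differentiableAt (by norm_num)
  have hψd : ∀ p ∈ U, DifferentiableAt ℝ ψ p := fun p hp => diff_conj (hφd p hp)
  -- E is the explicit formula for Λψ
  set E : ℂ × ℝ → ℂ := fun q =>
    (starRingEnd ℂ) (dz φ q) - Complex.I * q.1 * (starRingEnd ℂ) (dsR φ q) with hEdef
  have hLamψ : ∀ p, Lam ψ p = E p := fun p => Lam_conj
  have hψ0 : ψ 0 = 0 := by simp [hψdef, hφ0]
  have hE0 : E 0 = (starRingEnd ℂ) (dz φ 0) := by simp [hEdef]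
  have hLamψ0 : Lam ψ 0 = (starRingEnd ℂ) (dz φ 0) := by rw [hLamψ, hE0]
  -- Λ(ψ²) = 2 ψ Λψ on U
  have hsq : ∀ p ∈ U, Lam (fun q => ψ q ^ 2) p = 2 * (ψ p * Lam ψ p) := by
    intro p hp
    have h1 : (fun q => ψ q ^ 2) = fun q => ψ q * ψ q := by funext q; ring
    rw [h1, Lam_mul (hψd p hp) (hψd p hp)]
    ring
  -- differentiability of E at 0
  have hF : DifferentiableAt ℝ (fderiv ℝ φ) 0 := by
    have := (hφCA 0 h0U).fderiv_right (m := 1) (by norm_num)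
    exact this.differentiableAt (by norm_num)
  have hEd : DifferentiableAt ℝ E 0 := by
    have hA : DifferentiableAt ℝ (fun q => fderiv ℝ φ q (1, 0)) 0 :=
      hF.clm_apply (differentiableAt_const _)
    have hB : DifferentiableAt ℝ (fun q => fderiv ℝ φ q (Complex.I, 0)) 0 :=
      hF.clm_apply (differentiableAt_const _)
    have hC : DifferentiableAt ℝ (fun q => fderiv ℝ φ q (0, 1)) 0 :=
      hF.clm_apply (differentiableAt_const _)
    have hdz : DifferentiableAt ℝ (fun q => dz φ q) 0 := by
      unfold dz
      exact (differentiableAt_const _).mul (hA.sub ((differentiableAt_const _).mul hB))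
    have hds : DifferentiableAt ℝ (fun q => dsR φ q) 0 := hC
    have h1 : DifferentiableAt ℝ (fun q : ℂ × ℝ => (q.1 : ℂ)) 0 := differentiableAt_fst
    exact (diff_conj hdz).sub
      (((differentiableAt_const _).mul h1).mul (diff_conj hds))
  -- second-order computation
  have hkey : Lam (fun q => Lam (fun r => ψ r ^ 2) q) 0
      = 2 * ((starRingEnd ℂ) (dz φ 0)) ^ 2 := by
    have hev : (fun q => Lam (fun r => ψ r ^ 2) q) =ᶠ[𝓝 (0 : ℂ × ℝ)]
        (fun q => 2 * (ψ q * E q)) := by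
      filter_upwards [hUnhds] with q hq
      rw [hsq q hq, hLamψ]
    rw [Lam_congr hev, Lam_const_mul 2 (show DifferentiableAt ℝ (fun q => ψ q * E q) 0 from (hψd 0 h0U).mul hEd),
      Lam_mul (hψd 0 h0U) hEd, hψ0, hE0, hLamψ0]
    ring
  -- assemble the four conjuncts
  have hfirst : LamV (fun p => (((starRingEnd ℂ) (φ p)) ^ 2, (starRingEnd ℂ) (φ p))) 0 =
      (0, (starRingEnd ℂ) (dz φ 0)) := by
    show (Lam (fun q => ψ q ^ 2) 0, Lam ψ 0) = (0, (starRingEnd ℂ) (dz φ 0))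
    rw [hsq 0 h0U, hψ0, hLamψ0]
    simp
  have hsecond : (LamV (LamV (fun p =>
      (((starRingEnd ℂ) (φ p)) ^ 2, (starRingEnd ℂ) (φ p)))) 0).1 =
      2 * ((starRingEnd ℂ) (dz φ 0)) ^ 2 := by
    show Lam (fun q => Lam (fun r => ψ r ^ 2) q) 0 = 2 * ((starRingEnd ℂ) (dz φ 0)) ^ 2
    exact hkey
  have ha : (starRingEnd ℂ) (dz φ 0) ≠ 0 := by
    simpa using hφz0
  have hne : 2 * ((starRingEnd ℂ) (dz φ 0)) ^ 2 ≠ 0 :=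
    mul_ne_zero two_ne_zero (pow_ne_zero _ ha)
  refine ⟨hfirst, hsecond, hne, ?_⟩
  rw [hfirst]
  have hv2 : LamV (LamV (fun p => (((starRingEnd ℂ) (φ p)) ^ 2, (starRingEnd ℂ) (φ p)))) 0 =
      (2 * ((starRingEnd ℂ) (dz φ 0)) ^ 2,
        (LamV (LamV (fun p => (((starRingEnd ℂ) (φ p)) ^ 2, (starRingEnd ℂ) (φ p)))) 0).2) :=
    Prod.ext_iff.mpr ⟨hsecond, rfl⟩
  rw [hv2]
  exact span_pair_top ha hne _
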